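/- Let S be an uncountable set. Then ℓ∞^{c,F}(S) admits no Gâteaux differentiable renorming: for every norm N on ℓ∞^{c,F}(S) equivalent to the supremum norm, there exists a nonzero point x at which N is not Gâteaux differentiable. -/

import Mathlib

open scoped ENNReal

/-- The space `ℓ∞^c(ι)` of bounded functions with countable support. -/
noncomputable def linftyC (ι : Type*) : Submodule ℝ (lp (fun _ : ι => ℝ) ∞) where
  carrier := {x | (Function.support (⇑x : ι → ℝ)).Countable}
  zero_mem' := by
    simp only [Set.mem_setOf_eq, lp.coeFn_zero]
    simp
  add_mem' := by
    intro x y hx hy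
    refine ((hx.union hy).mono ?_ : _)
    rw [lp.coeFn_add]
    exact Function.support_add _ _
  smul_mem' := by
    intro c x hx
    refine hx.mono ?_
    rw [lp.coeFn_smul]
    intro i hi
    exact fun h => hi (by simp [h])

/-- The space `ℓ∞^{c,F}(ι)` of finitely-valued bounded functions with countable support. -/
noncomputable def linftyCF (ι : Type*) : Submodule ℝ (lp (fun _ : ι => ℝ) ∞) where
  carrier := {x | (Function.support (⇑x : ι → ℝ)).Countable ∧ (Set.range (⇑x : ι → ℝ)).Finite}
  zero_mem' := by
    constructor
    · simp only [Set.mem_setOf_eq, lp.coeFn_zero]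
      simp
    · simp only [Set.mem_setOf_eq, lp.coeFn_zero]
      exact (Set.finite_singleton 0).subset Set.range_const_subset
  add_mem' := by
    rintro x y ⟨hx1, hx2⟩ ⟨hy1, hy2⟩
    constructor
    · refine ((hx1.union hy1).mono ?_ : _)
      rw [lp.coeFn_add]
      exact Function.support_add _ _
    · have h : Set.range (⇑(x + y) : _ → ℝ) ⊆
          Set.image2 (· + ·) (Set.range (⇑x : _ → ℝ)) (Set.range (⇑y : _ → ℝ)) := by
        rw [lp.coeFn_add]
        rintro _ ⟨n, rfl⟩
        exact ⟨x n, ⟨n, rfl⟩, y n, ⟨n, rfl⟩, rfl⟩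
      exact (Set.Finite.image2 _ hx2 hy2).subset h
  smul_mem' := by
    rintro c x ⟨hx1, hx2⟩
    constructor
    · refine hx1.mono ?_
      rw [lp.coeFn_smul]
      intro i hi
      exact fun h => hi (by simp [h])
    · have h : Set.range (⇑(c • x) : _ → ℝ) ⊆ (fun t => c • t) '' Set.range (⇑x : _ → ℝ) := by
        rw [lp.coeFn_smul]
        rintro _ ⟨n, rfl⟩
        exact ⟨x n, ⟨n, rfl⟩, rfl⟩
      exact (hx2.image _).subset h

/-- `N` is a norm on the real vector space `Y`. -/
def IsNorm {Y : Type*} [AddCommGroup Y] [Module ℝ Y] (N : Y → ℝ) : Prop :=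
  (∀ x y, N (x + y) ≤ N x + N y) ∧ (∀ (a : ℝ) (x : Y), N (a • x) = |a| * N x) ∧
    ∀ x, N x = 0 → x = 0

/-- `N` is equivalent to the ambient norm of `Y`. -/
def IsEquivToAmbientNorm {Y : Type*} [NormedAddCommGroup Y] (N : Y → ℝ) : Prop :=
  ∃ a b : ℝ, 0 < a ∧ a ≤ b ∧ ∀ x : Y, a * ‖x‖ ≤ N x ∧ N x ≤ b * ‖x‖

/-- `N` is Gâteaux differentiable at `x`: there is a continuous linear functional `f`
with `(N (x + t • h) - N x) / t → f h` as `t → 0`, for every direction `h`. -/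
def GateauxDifferentiableAt {Y : Type*} [NormedAddCommGroup Y] [NormedSpace ℝ Y]
    (N : Y → ℝ) (x : Y) : Prop :=
  ∃ f : Y →L[ℝ] ℝ, ∀ h : Y,
    Filter.Tendsto (fun t : ℝ => (N (x + t • h) - N x) / t)
      (nhdsWithin 0 {t : ℝ | t ≠ 0}) (nhds (f h))

namespace NoGateaux

variable {S : Type*}

/-- Evaluation of an element of `linftyCF S` as a function. -/
def ev (x : linftyCF S) : S → ℝ := ⇑(x : lp (fun _ : S => ℝ) ∞)

@[simp] lemma ev_add (x y : linftyCF S) : ev (x + y) = ev x + ev y := by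
  have : ((x + y : linftyCF S) : lp (fun _ : S => ℝ) ∞) = (x : lp _ ∞) + (y : lp _ ∞) := rfl
  simp only [ev, this, lp.coeFn_add]

@[simp] lemma ev_neg (x : linftyCF S) : ev (-x) = -ev x := by
  have : ((-x : linftyCF S) : lp (fun _ : S => ℝ) ∞) = -(x : lp _ ∞) := rfl
  simp only [ev, this, lp.coeFn_neg]

@[simp] lemma ev_sub (x y : linftyCF S) : ev (x - y) = ev x - ev y := by
  have : ((x - y : linftyCF S) : lp (fun _ : S => ℝ) ∞) = (x : lp _ ∞) - (y : lp _ ∞) := rfl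
  simp only [ev, this, lp.coeFn_sub]

@[simp] lemma ev_smul (c : ℝ) (x : linftyCF S) : ev (c • x) = c • ev x := by
  have : ((c • x : linftyCF S) : lp (fun _ : S => ℝ) ∞) = c • (x : lp _ ∞) := rfl
  simp only [ev, this, lp.coeFn_smul]

@[simp] lemma ev_zero : ev (0 : linftyCF S) = 0 := by
  have : ((0 : linftyCF S) : lp (fun _ : S => ℝ) ∞) = 0 := rfl
  simp only [ev, this, lp.coeFn_zero]

lemma ev_injective : Function.Injective (ev (S := S)) := by
  intro x y h
  apply Subtype.ext
  apply lp.ext h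

lemma ne_zero_of_ev {x : linftyCF S} {γ : S} (h : ev x γ ≠ 0) : x ≠ 0 := by
  intro hx
  rw [hx] at h
  simp at h

lemma norm_eq (x : linftyCF S) : ‖x‖ = ‖(x : lp (fun _ : S => ℝ) ∞)‖ := rfl

/-- Build an element of `linftyCF S` from a function with values of absolute value at most 1,
countable support and finite range. -/
def mk (f : S → ℝ) (hb : ∀ γ, |f γ| ≤ 1) (hc : (Function.support f).Countable)
  (hfin : (Set.range f).Finite) : linftyCF S :=
  ⟨⟨f, memℓp_infty ⟨1, by rintro r ⟨γ, rfl⟩; simpa using hb γ⟩⟩, hc, hfin⟩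

@[simp] lemma ev_mk (f : S → ℝ) (hb hc hfin) : ev (mk f hb hc hfin) = f := rfl

/-- A "pattern": an element taking values in {-1, 0, 1}. -/
def IsPat (w : linftyCF S) : Prop := ∀ γ, ev w γ = 1 ∨ ev w γ = -1 ∨ ev w γ = 0

lemma IsPat.abs_le {w : linftyCF S} (hw : IsPat w) (γ : S) : |ev w γ| ≤ 1 := by
  rcases hw γ with h | h | h <;> rw [h] <;> norm_num

lemma IsPat.norm_le_one {w : linftyCF S} (hw : IsPat w) : ‖w‖ ≤ 1 := by
  rw [norm_eq]
  exact lp.norm_le_of_forall_le zero_le_one fun γ => by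
    rw [Real.norm_eq_abs]; exact hw.abs_le γ

lemma IsPat.zero : IsPat (0 : linftyCF S) := fun γ => by simp

lemma IsPat.neg {w : linftyCF S} (hw : IsPat w) : IsPat (-w) := by
  intro γ
  rcases hw γ with h | h | h <;> simp [h]

lemma IsPat.add {w₁ w₂ : linftyCF S} (h₁ : IsPat w₁) (h₂ : IsPat w₂)
    (hd : ∀ γ, ev w₁ γ = 0 ∨ ev w₂ γ = 0) : IsPat (w₁ + w₂) := by
  intro γ
  rcases hd γ with h | h <;> simp only [ev_add, Pi.add_apply, h, zero_add, add_zero]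
  · exact h₂ γ
  · exact h₁ γ

/-- Patterns vanishing on `D`. -/
def PatFresh (D : Set S) : Set (linftyCF S) := {w | IsPat w ∧ ∀ γ ∈ D, ev w γ = 0}

lemma PatFresh.zero (D : Set S) : (0 : linftyCF S) ∈ PatFresh D :=
  ⟨IsPat.zero, fun γ _ => by simp⟩

lemma PatFresh.neg {D : Set S} {w : linftyCF S} (h : w ∈ PatFresh D) : -w ∈ PatFresh D :=
  ⟨h.1.neg, fun γ hγ => by simp [h.2 γ hγ]⟩

lemma PatFresh.mono {D D' : Set S} (h : D ⊆ D') : PatFresh D' ⊆ PatFresh D :=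
  fun _ hw => ⟨hw.1, fun γ hγ => hw.2 γ (h hγ)⟩

open scoped Topology

/-! ## Generic one–sided subgradient lemmas -/

section Generic
variable {YY : Type*} [NormedAddCommGroup YY] [NormedSpace ℝ YY]

/-- derivative property -/
def IsDeriv (N : YY → ℝ) (x : YY) (f : YY →L[ℝ] ℝ) : Prop :=
  ∀ h : YY, Filter.Tendsto (fun t : ℝ => (N (x + t • h) - N x) / t)
      (nhdsWithin 0 {t : ℝ | t ≠ 0}) (nhds (f h))

lemma punct_eq : {t : ℝ | t ≠ 0} = ({0}ᶜ : Set ℝ) := rfl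

instance punct_neBot : (nhdsWithin (0:ℝ) {t : ℝ | t ≠ 0}).NeBot := by
  rw [punct_eq]; infer_instance

structure NormHyp (N : YY → ℝ) (a b : ℝ) : Prop where
  ha : 0 < a
  hab : a ≤ b
  sub : ∀ x y, N (x + y) ≤ N x + N y
  hom : ∀ (c : ℝ) (x : YY), N (c • x) = |c| * N x
  low : ∀ x, a * ‖x‖ ≤ N x
  upp : ∀ x, N x ≤ b * ‖x‖

variable {N : YY → ℝ} {a b : ℝ}

lemma NormHyp.nonneg (H : NormHyp N a b) (x : YY) : 0 ≤ N x :=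
  le_trans (mul_nonneg H.ha.le (norm_nonneg x)) (H.low x)

lemma NormHyp.pos (H : NormHyp N a b) {x : YY} (hx : x ≠ 0) : 0 < N x :=
  lt_of_lt_of_le (mul_pos H.ha (norm_pos_iff.mpr hx)) (H.low x)

lemma smul_id (x u : YY) (t : ℝ) : x + t • u = (1 - t) • x + t • (x + u) := by
  rw [smul_add, sub_smul, one_smul]; abel

lemma NormHyp.subOne (H : NormHyp N a b) (x u : YY) {t : ℝ} (ht : t ∈ Set.Ioc (0:ℝ) 1) :
    (N (x + t • u) - N x) / t ≤ N (x + u) - N x := by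
  have h1 : N (x + t • u) ≤ (1 - t) * N x + t * N (x + u) := by
    rw [smul_id x u t]
    refine le_trans (H.sub _ _) ?_
    rw [H.hom, H.hom, abs_of_nonneg (by linarith [ht.2] : (0:ℝ) ≤ 1 - t),
      abs_of_pos ht.1]
  rw [div_le_iff₀ ht.1]
  nlinarith [ht.1]

/-- One-sided subgradient inequality. -/
lemma NormHyp.grad_le (H : NormHyp N a b) {x : YY} {f : YY →L[ℝ] ℝ}
    (hf : IsDeriv N x f) (u : YY) :
    f u ≤ N (x + u) - N x := by
  have hmono : Filter.Tendsto (fun t : ℝ => (N (x + t • u) - N x) / t)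
      (nhdsWithin 0 (Set.Ioi 0)) (nhds (f u)) :=
    (hf u).mono_left (nhdsWithin_mono 0 (fun t ht => ne_of_gt ht))
  refine le_of_tendsto hmono ?_
  filter_upwards [Ioc_mem_nhdsGT_of_mem (by norm_num : (0:ℝ) ∈ Set.Ico (0:ℝ) 1)] with t ht
  exact H.subOne x u ht

lemma NormHyp.grad_le_N (H : NormHyp N a b) {x : YY} {f : YY →L[ℝ] ℝ}
    (hf : IsDeriv N x f) (u : YY) : f u ≤ N u := by
  have h1 := H.grad_le hf u
  have h2 := H.sub x u
  linarith

lemma NormHyp.grad_self (H : NormHyp N a b) {x : YY} {f : YY →L[ℝ] ℝ}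
    (hf : IsDeriv N x f) : f x = N x := by
  have hconst : Filter.Tendsto (fun _ : ℝ => N x)
      (nhdsWithin 0 {t : ℝ | t ≠ 0}) (nhds (N x)) := tendsto_const_nhds
  refine tendsto_nhds_unique ((hf x).congr' ?_) hconst
  have hmem : Set.Ioo (-1 : ℝ) 1 ∈ nhdsWithin (0:ℝ) {t : ℝ | t ≠ 0} :=
    mem_nhdsWithin_of_mem_nhds (isOpen_Ioo.mem_nhds (by norm_num))
  filter_upwards [hmem, self_mem_nhdsWithin] with t ht ht0
  have h1 : x + t • x = (1 + t) • x := by rw [add_smul, one_smul]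
  have h2 : (0:ℝ) < 1 + t := by linarith [ht.1]
  have ht0' : (t : ℝ) ≠ 0 := ht0
  rw [h1, H.hom, abs_of_pos h2]
  field_simp
  ring

end Generic

/-! ## The sup over fresh pattern extensions -/

lemma supp_countable (x : linftyCF S) : (Function.support (ev x)).Countable := x.2.1

def Fam (z : linftyCF S) (D : Set S) : Set (linftyCF S) := (fun w => z + w) '' PatFresh D

noncomputable def Sig (N : linftyCF S → ℝ) (z : linftyCF S) (D : Set S) : ℝ :=
  sSup (N '' Fam z D)

lemma self_mem_Fam (z : linftyCF S) (D : Set S) : z ∈ Fam z D :=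
  ⟨0, PatFresh.zero D, by simp⟩

lemma Fam_nonempty (N : linftyCF S → ℝ) (z : linftyCF S) (D : Set S) :
    (N '' Fam z D).Nonempty := ⟨N z, z, self_mem_Fam z D, rfl⟩

lemma Fam_isPat {z : linftyCF S} {D : Set S} (hz : IsPat z) (hzD : ∀ γ, γ ∉ D → ev z γ = 0)
    {y : linftyCF S} (hy : y ∈ Fam z D) : IsPat y := by
  obtain ⟨w, hw, rfl⟩ := hy
  refine hz.add hw.1 (fun γ => ?_)
  by_cases hγ : γ ∈ D
  · exact Or.inr (hw.2 γ hγ)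
  · exact Or.inl (hzD γ hγ)

section WithN
variable [Uncountable S] {N : linftyCF S → ℝ} {a b : ℝ}

lemma Fam_bdd (H : NormHyp N a b) {z : linftyCF S} {D : Set S}
    (hz : IsPat z) (hzD : ∀ γ, γ ∉ D → ev z γ = 0) : BddAbove (N '' Fam z D) := by
  refine ⟨b, ?_⟩
  rintro r ⟨y, hy, rfl⟩
  have hp : IsPat y := Fam_isPat hz hzD hy
  calc N y ≤ b * ‖y‖ := H.upp y
    _ ≤ b * 1 := by
        have hb : (0:ℝ) ≤ b := H.ha.le.trans H.hab
        exact mul_le_mul_of_nonneg_left hp.norm_le_one hb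
    _ = b := mul_one b

lemma le_Sig (H : NormHyp N a b) {z : linftyCF S} {D : Set S}
    (hz : IsPat z) (hzD : ∀ γ, γ ∉ D → ev z γ = 0)
    {y : linftyCF S} (hy : y ∈ Fam z D) : N y ≤ Sig N z D :=
  le_csSup (Fam_bdd H hz hzD) ⟨y, hy, rfl⟩

lemma Sig_le {z : linftyCF S} {D : Set S} {c : ℝ}
    (h : ∀ y ∈ Fam z D, N y ≤ c) : Sig N z D ≤ c :=
  csSup_le (Fam_nonempty N z D) (by rintro r ⟨y, hy, rfl⟩; exact h y hy)

/-! ## The greedy chain -/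

structure ChSt (N : linftyCF S → ℝ) (F : Set S) (γ₀ : S) where
  z : linftyCF S
  D : Set S
  hpat : IsPat z
  hD : D.Countable
  hFD : F ⊆ D
  hzD : ∀ γ, γ ∉ D → ev z γ = 0
  hγ₀ : ev z γ₀ = 1

lemma chain_step (H : NormHyp N a b) {F : Set S} {γ₀ : S} (s : ChSt N F γ₀)
    {ε : ℝ} (hε : 0 < ε) :
    ∃ s' : ChSt N F γ₀, ∃ w ∈ PatFresh s.D,
      s'.z = s.z + w ∧ s'.D = s.D ∪ Function.support (ev w) ∧
      Sig N s.z s.D - ε < N s'.z := by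
  obtain ⟨r, hr, hlt⟩ := exists_lt_of_lt_csSup (Fam_nonempty N s.z s.D)
    (sub_lt_self (Sig N s.z s.D) hε)
  obtain ⟨y, hy, rfl⟩ := hr
  obtain ⟨w, hw, rfl⟩ := hy
  have hγ₀D : γ₀ ∈ s.D := by
    by_contra hc
    have := s.hzD γ₀ hc
    rw [s.hγ₀] at this; norm_num at this
  refine ⟨⟨s.z + w, s.D ∪ Function.support (ev w), Fam_isPat s.hpat s.hzD ⟨w, hw, rfl⟩,
      s.hD.union (supp_countable w), s.hFD.trans Set.subset_union_left, ?_, ?_⟩,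
    w, hw, rfl, rfl, hlt⟩
  · intro γ hγ
    rw [Set.mem_union] at hγ
    push_neg at hγ
    have h1 : ev s.z γ = 0 := s.hzD γ hγ.1
    have h2 : ev w γ = 0 := by
      by_contra hc
      exact hγ.2 hc
    simp [h1, h2]
  · have h2 : ev w γ₀ = 0 := hw.2 γ₀ hγ₀D
    simp [s.hγ₀, h2]

noncomputable def eps (n : ℕ) : ℝ := 1 / (n + 1)

lemma eps_pos (n : ℕ) : 0 < eps n := by
  unfold eps; positivity

noncomputable def chainSeq (H : NormHyp N a b) {F : Set S} {γ₀ : S} (s0 : ChSt N F γ₀) :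
    ℕ → ChSt N F γ₀ :=
  fun n => Nat.rec s0 (fun m s => (chain_step H s (eps_pos m)).choose) n

lemma chainSeq_zero (H : NormHyp N a b) {F : Set S} {γ₀ : S} (s0 : ChSt N F γ₀) :
    chainSeq H s0 0 = s0 := rfl

lemma chainSeq_spec (H : NormHyp N a b) {F : Set S} {γ₀ : S} (s0 : ChSt N F γ₀) (n : ℕ) :
    ∃ w ∈ PatFresh (chainSeq H s0 n).D,
      (chainSeq H s0 (n+1)).z = (chainSeq H s0 n).z + w ∧
      (chainSeq H s0 (n+1)).D = (chainSeq H s0 n).D ∪ Function.support (ev w) ∧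
      Sig N (chainSeq H s0 n).z (chainSeq H s0 n).D - eps n < N (chainSeq H s0 (n+1)).z :=
  (chain_step H (chainSeq H s0 n) (eps_pos n)).choose_spec

end WithN


/-! ## Chain analysis -/

section Chain
variable [Uncountable S] {N : linftyCF S → ℝ} {a b : ℝ} {F : Set S} {γ₀ : S}

noncomputable def Zc (H : NormHyp N a b) (s0 : ChSt N F γ₀) (n : ℕ) : linftyCF S :=
  (chainSeq H s0 n).z

noncomputable def Dc (H : NormHyp N a b) (s0 : ChSt N F γ₀) (n : ℕ) : Set S :=
  (chainSeq H s0 n).D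

noncomputable def Rc (H : NormHyp N a b) (s0 : ChSt N F γ₀) (n : ℕ) : ℝ :=
  Sig N (Zc H s0 n) (Dc H s0 n)

variable (H : NormHyp N a b) (s0 : ChSt N F γ₀)

lemma Dc_succ_subset (n : ℕ) : Dc H s0 n ⊆ Dc H s0 (n+1) := by
  obtain ⟨w, hw, h1, h2, h3⟩ := chainSeq_spec H s0 n
  rw [show Dc H s0 (n+1) = (chainSeq H s0 (n+1)).D from rfl, h2]
  exact Set.subset_union_left

lemma Dc_mono {m n : ℕ} (h : m ≤ n) : Dc H s0 m ⊆ Dc H s0 n := by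
  induction n, h using Nat.le_induction with
  | base => exact subset_rfl
  | succ n hmn ih => exact ih.trans (Dc_succ_subset H s0 n)

lemma supp_Zc_subset (n : ℕ) : Function.support (ev (Zc H s0 n)) ⊆ Dc H s0 n := by
  intro γ hγ
  by_contra hc
  exact hγ ((chainSeq H s0 n).hzD γ hc)

lemma stab {m n : ℕ} (h : m ≤ n) {γ : S} (hγ : ev (Zc H s0 m) γ ≠ 0) :
    ev (Zc H s0 n) γ = ev (Zc H s0 m) γ := by
  induction n, h using Nat.le_induction with
  | base => rfl
  | succ n hmn ih =>
    obtain ⟨w, hw, h1, h2, h3⟩ := chainSeq_spec H s0 n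
    have hγD : γ ∈ Dc H s0 n := by
      apply supp_Zc_subset H s0 n
      rw [Function.mem_support, ih]
      exact hγ
    have hw0 : ev w γ = 0 := hw.2 γ hγD
    have : ev (Zc H s0 (n+1)) γ = ev (Zc H s0 n) γ + ev w γ := by
      rw [show Zc H s0 (n+1) = (chainSeq H s0 (n+1)).z from rfl, h1]
      simp [ev_add]
      rfl
    rw [this, hw0, add_zero, ih]

lemma zero_forever {n : ℕ} {γ : S} (hγD : γ ∈ Dc H s0 n) (h0 : ev (Zc H s0 n) γ = 0) :
    ∀ m, ev (Zc H s0 m) γ = 0 := by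
  have hup : ∀ m, n ≤ m → ev (Zc H s0 m) γ = 0 := by
    intro m hm
    induction m, hm using Nat.le_induction with
    | base => exact h0
    | succ m hnm ih =>
      obtain ⟨w, hw, h1, h2, h3⟩ := chainSeq_spec H s0 m
      have hw0 : ev w γ = 0 := hw.2 γ (Dc_mono H s0 hnm hγD)
      have : ev (Zc H s0 (m+1)) γ = ev (Zc H s0 m) γ + ev w γ := by
        rw [show Zc H s0 (m+1) = (chainSeq H s0 (m+1)).z from rfl, h1]
        simp [ev_add]
        rfl
      rw [this, hw0, ih, add_zero]
  intro m
  rcases le_total n m with hm | hm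
  · exact hup m hm
  · by_contra hc
    rw [stab H s0 hm hc] at h0
    exact hc h0

lemma Rc_succ_le (n : ℕ) : Rc H s0 (n+1) ≤ Rc H s0 n := by
  obtain ⟨w, hw, h1, h2, h3⟩ := chainSeq_spec H s0 n
  refine Sig_le ?_
  rintro y ⟨w', hw', rfl⟩
  have hww' : ∀ γ, ev w γ = 0 ∨ ev w' γ = 0 := by
    intro γ
    by_cases hc : ev w γ = 0
    · exact Or.inl hc
    · refine Or.inr (hw'.2 γ ?_)
      rw [show Dc H s0 (n+1) = (chainSeq H s0 (n+1)).D from rfl, h2]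
      exact Set.mem_union_right _ hc
  have hmem : Zc H s0 (n+1) + w' ∈ Fam (Zc H s0 n) (Dc H s0 n) := by
    refine ⟨w + w', ⟨hw.1.add hw'.1 hww', ?_⟩, ?_⟩
    · intro γ hγ
      have e1 : ev w γ = 0 := hw.2 γ hγ
      have e2 : ev w' γ = 0 := hw'.2 γ (Dc_succ_subset H s0 n hγ)
      simp [ev_add, e1, e2]
    · show Zc H s0 n + (w + w') = Zc H s0 (n+1) + w'
      rw [show Zc H s0 (n+1) = (chainSeq H s0 n).z + w from h1, ← add_assoc]
      rfl
  exact le_Sig H (chainSeq H s0 n).hpat (chainSeq H s0 n).hzD hmem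

lemma Rc_mono {m n : ℕ} (h : m ≤ n) : Rc H s0 n ≤ Rc H s0 m := by
  induction n, h using Nat.le_induction with
  | base => exact le_rfl
  | succ n hmn ih => exact (Rc_succ_le H s0 n).trans ih

lemma NZc_le_Rc (n : ℕ) : N (Zc H s0 n) ≤ Rc H s0 n :=
  le_Sig H (chainSeq H s0 n).hpat (chainSeq H s0 n).hzD (self_mem_Fam _ _)

lemma greedy (n : ℕ) : Rc H s0 n - eps n < N (Zc H s0 (n+1)) :=
  (chainSeq_spec H s0 n).choose_spec.2.2.2

open Classical in
/-- The limit function of the chain. -/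
noncomputable def limFun : S → ℝ := fun γ =>
  if h : ∃ n, ev (Zc H s0 n) γ ≠ 0 then ev (Zc H s0 h.choose) γ else 0

open Classical in
lemma limFun_eq {n : ℕ} {γ : S} (h : ev (Zc H s0 n) γ ≠ 0) :
    limFun H s0 γ = ev (Zc H s0 n) γ := by
  have hex : ∃ m, ev (Zc H s0 m) γ ≠ 0 := ⟨n, h⟩
  rw [limFun, dif_pos hex]
  rcases le_total hex.choose n with hmn | hmn
  · rw [stab H s0 hmn hex.choose_spec]
  · rw [stab H s0 hmn h]

open Classical in
lemma limFun_zero {γ : S} (h : ∀ n, ev (Zc H s0 n) γ = 0) : limFun H s0 γ = 0 := by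
  rw [limFun, dif_neg]
  push_neg
  exact h

lemma limFun_cases (γ : S) : limFun H s0 γ = 1 ∨ limFun H s0 γ = -1 ∨ limFun H s0 γ = 0 := by
  by_cases h : ∃ n, ev (Zc H s0 n) γ ≠ 0
  · obtain ⟨n, hn⟩ := h
    rw [limFun_eq H s0 hn]
    exact (chainSeq H s0 n).hpat γ
  · push_neg at h
    rw [limFun_zero H s0 h]
    tauto

lemma limFun_support : Function.support (limFun H s0) ⊆ ⋃ n, Dc H s0 n := by
  intro γ hγ
  rw [Function.mem_support] at hγ
  by_cases h : ∃ n, ev (Zc H s0 n) γ ≠ 0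
  · obtain ⟨n, hn⟩ := h
    exact Set.mem_iUnion.mpr ⟨n, supp_Zc_subset H s0 n hn⟩
  · push_neg at h
    exact absurd (limFun_zero H s0 h) hγ

/-- The limit point of the chain. -/
noncomputable def xc : linftyCF S :=
  mk (limFun H s0)
    (fun γ => by rcases limFun_cases H s0 γ with h | h | h <;> rw [h] <;> norm_num)
    (((Set.countable_iUnion (fun n => (chainSeq H s0 n).hD)).mono (limFun_support H s0)))
    (Set.Finite.subset (Set.toFinite {1, -1, 0}) (by
      rintro r ⟨γ, rfl⟩
      rcases limFun_cases H s0 γ with h | h | h <;> simp [h]))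

lemma ev_xc : ev (xc H s0) = limFun H s0 := rfl

lemma xc_pat : IsPat (xc H s0) := fun γ => limFun_cases H s0 γ

lemma tail_mem (n : ℕ) : xc H s0 - Zc H s0 n ∈ PatFresh (Dc H s0 n) := by
  constructor
  · intro γ
    have he : ev (xc H s0 - Zc H s0 n) γ = limFun H s0 γ - ev (Zc H s0 n) γ := by
      simp [ev_sub, ev_xc]
    by_cases h : ev (Zc H s0 n) γ = 0
    · rw [he, h, sub_zero]
      exact limFun_cases H s0 γ
    · rw [he, limFun_eq H s0 h, sub_self]
      tauto
  · intro γ hγ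
    have he : ev (xc H s0 - Zc H s0 n) γ = limFun H s0 γ - ev (Zc H s0 n) γ := by
      simp [ev_sub, ev_xc]
    by_cases h : ev (Zc H s0 n) γ = 0
    · rw [he, h, sub_zero]
      exact limFun_zero H s0 (zero_forever H s0 hγ h)
    · rw [he, limFun_eq H s0 h, sub_self]

lemma xc_eq (n : ℕ) : xc H s0 = Zc H s0 n + (xc H s0 - Zc H s0 n) := by abel

lemma xc_mem (n : ℕ) : xc H s0 ∈ Fam (Zc H s0 n) (Dc H s0 n) :=
  ⟨xc H s0 - Zc H s0 n, tail_mem H s0 n, (xc_eq H s0 n).symm⟩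

lemma Nxc_le (n : ℕ) : N (xc H s0) ≤ Rc H s0 n :=
  le_Sig H (chainSeq H s0 n).hpat (chainSeq H s0 n).hzD (xc_mem H s0 n)

lemma Zc_ne_zero (n : ℕ) : Zc H s0 n ≠ 0 :=
  ne_zero_of_ev (γ := γ₀) (by
    show ev (chainSeq H s0 n).z γ₀ ≠ 0
    rw [(chainSeq H s0 n).hγ₀]; norm_num)

lemma xc_ne_zero : xc H s0 ≠ 0 := by
  refine ne_zero_of_ev (γ := γ₀) ?_
  have h0 : ev (Zc H s0 0) γ₀ ≠ 0 := by
    show ev (chainSeq H s0 0).z γ₀ ≠ 0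
    rw [(chainSeq H s0 0).hγ₀]; norm_num
  rw [ev_xc, limFun_eq H s0 h0]
  exact h0

lemma Nxc_ge (hsm : ∀ y : linftyCF S, y ≠ 0 → ∃ f, IsDeriv N y f) (n : ℕ) :
    Rc H s0 n - 2 * eps n ≤ N (xc H s0) := by
  obtain ⟨f, hf⟩ := hsm (Zc H s0 (n+1)) (Zc_ne_zero H s0 (n+1))
  set t := xc H s0 - Zc H s0 (n+1) with ht
  have hc1 : N (Zc H s0 (n+1) + -t) ≤ Rc H s0 (n+1) :=
    le_Sig H (chainSeq H s0 (n+1)).hpat (chainSeq H s0 (n+1)).hzD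
      ⟨-t, PatFresh.neg (tail_mem H s0 (n+1)), rfl⟩
  have hc2 : f (-t) ≤ N (Zc H s0 (n+1) + -t) - N (Zc H s0 (n+1)) := H.grad_le hf (-t)
  have hc3 : f (xc H s0) ≤ N (xc H s0) := H.grad_le_N hf _
  have hc4 : f (xc H s0) = N (Zc H s0 (n+1)) + f t := by
    rw [show xc H s0 = Zc H s0 (n+1) + t from xc_eq H s0 (n+1), map_add,
      H.grad_self hf]
  have hc5 : f (-t) = -(f t) := map_neg f t
  have hc6 : Rc H s0 n - eps n < N (Zc H s0 (n+1)) := greedy H s0 n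
  have hc7 : Rc H s0 (n+1) ≤ Rc H s0 n := Rc_succ_le H s0 n
  linarith

lemma two_eps_lt {ε : ℝ} (hε : 0 < ε) : ∃ n : ℕ, 2 * eps n < ε := by
  obtain ⟨n, hn⟩ := exists_nat_gt (2 / ε)
  refine ⟨n, ?_⟩
  have h1 : (0:ℝ) < (n:ℝ) + 1 := by positivity
  have h2 : (2:ℝ) < (n:ℝ) * ε := (div_lt_iff₀ hε).mp hn
  rw [eps, mul_one_div, div_lt_iff₀ h1]
  nlinarith [hε.le]

lemma xc_add_mem {w' : linftyCF S} (hw' : w' ∈ PatFresh (⋃ n, Dc H s0 n)) (n : ℕ) :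
    xc H s0 + w' ∈ Fam (Zc H s0 n) (Dc H s0 n) := by
  have htail := tail_mem H s0 n
  have hdisj : ∀ γ, ev (xc H s0 - Zc H s0 n) γ = 0 ∨ ev w' γ = 0 := by
    intro γ
    by_cases h : ev (xc H s0 - Zc H s0 n) γ = 0
    · exact Or.inl h
    · refine Or.inr (hw'.2 γ ?_)
      have he : ev (xc H s0 - Zc H s0 n) γ = limFun H s0 γ - ev (Zc H s0 n) γ := by
        simp [ev_sub, ev_xc]
      by_cases h2 : ev (Zc H s0 n) γ = 0
      · have h3 : limFun H s0 γ ≠ 0 := by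
          rw [he, h2, sub_zero] at h
          exact h
        exact limFun_support H s0 (Function.mem_support.mpr h3)
      · exact Set.mem_iUnion.mpr ⟨n, supp_Zc_subset H s0 n h2⟩
  refine ⟨(xc H s0 - Zc H s0 n) + w', ⟨htail.1.add hw'.1 hdisj, ?_⟩, ?_⟩

  · intro γ hγ
    have e1 : ev (xc H s0 - Zc H s0 n) γ = 0 := htail.2 γ hγ
    have e2 : ev w' γ = 0 :=
      hw'.2 γ (Set.mem_iUnion.mpr ⟨n, hγ⟩)
    have e1' : ev (xc H s0) γ - ev (Zc H s0 n) γ = 0 := by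
      simpa [ev_sub, Pi.sub_apply] using e1
    simp [ev_add, Pi.add_apply, ev_sub, Pi.sub_apply, e2, e1']
  · abel

/-- The plateau property at the limit point. -/
lemma xc_plateau (hsm : ∀ y : linftyCF S, y ≠ 0 → ∃ f, IsDeriv N y f)
    {w : linftyCF S} (hw : w ∈ PatFresh (⋃ n, Dc H s0 n)) :
    N (xc H s0 + w) = N (xc H s0) := by
  have hupp : ∀ w' ∈ PatFresh (⋃ n, Dc H s0 n), N (xc H s0 + w') ≤ N (xc H s0) := by
    intro w' hw'
    have hle : ∀ n, N (xc H s0 + w') ≤ Rc H s0 n := fun n =>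
      le_Sig H (chainSeq H s0 n).hpat (chainSeq H s0 n).hzD (xc_add_mem H s0 hw' n)
    refine le_of_forall_pos_le_add ?_
    intro ε hε
    obtain ⟨n, hn⟩ := two_eps_lt hε
    have h1 := Nxc_ge H s0 hsm n
    have h2 := hle n
    linarith
  obtain ⟨f, hf⟩ := hsm (xc H s0) (xc_ne_zero H s0)
  have hfw1 : f w ≤ 0 := by
    have := H.grad_le hf w
    have := hupp w hw
    linarith
  have hfw2 : f (-w) ≤ 0 := by
    have := H.grad_le hf (-w)
    have := hupp (-w) (PatFresh.neg hw)
    linarith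
  have hfw : f w = 0 := by
    have := map_neg f w
    have h1 : -(f w) ≤ 0 := by rw [← map_neg f w]; exact hfw2
    linarith
  have hlow : N (xc H s0) ≤ N (xc H s0 + w) := by
    have h4 : f (xc H s0 + w) ≤ N (xc H s0 + w) := H.grad_le_N hf _
    rw [map_add, H.grad_self hf, hfw, add_zero] at h4
    exact h4
  exact le_antisymm (hupp w hw) hlow

end Chain

/-! ## Attainment points -/

structure Att (N : linftyCF S → ℝ) (F : Set S) where
  x : linftyCF S
  D : Set S
  hD : D.Countable
  hpat : IsPat x
  hxD : ∀ γ, γ ∉ D → ev x γ = 0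
  hxF : ∀ γ ∈ F, ev x γ = 0
  hne : x ≠ 0
  plateau : ∀ w ∈ PatFresh D, N (x + w) = N x

section AttSec
variable [Uncountable S] {N : linftyCF S → ℝ} {a b : ℝ}

lemma att_exists (H : NormHyp N a b)
    (hsm : ∀ y : linftyCF S, y ≠ 0 → ∃ f, IsDeriv N y f)
    (F : Set S) (hF : F.Countable) : Nonempty (Att N F) := by
  classical
  obtain ⟨γ₀, hγ₀⟩ : ∃ γ, γ ∉ F := by
    by_contra hc
    push_neg at hc
    exact Set.not_countable_univ (hF.mono (fun γ _ => hc γ))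
  let f0 : S → ℝ := fun γ => if γ = γ₀ then 1 else 0
  have hf0 : ∀ γ, f0 γ = 1 ∨ f0 γ = -1 ∨ f0 γ = 0 := by
    intro γ
    by_cases h : γ = γ₀ <;> simp [f0, h]
  let z0 : linftyCF S := mk f0
    (fun γ => by rcases hf0 γ with h | h | h <;> rw [h] <;> norm_num)
    ((Set.countable_singleton γ₀).mono (by
      intro γ hγ
      rw [Function.mem_support] at hγ
      by_contra hne
      refine hγ ?_
      show (if γ = γ₀ then (1:ℝ) else 0) = 0
      exact if_neg (by simpa using hne)))
    (Set.Finite.subset (Set.toFinite {1, -1, 0}) (by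
      rintro r ⟨γ, rfl⟩
      rcases hf0 γ with h | h | h <;> simp [h]))
  have hz0 : ev z0 = f0 := rfl
  let s0 : ChSt N F γ₀ :=
    { z := z0
      D := F ∪ {γ₀}
      hpat := fun γ => by rw [hz0]; exact hf0 γ
      hD := hF.union (Set.countable_singleton γ₀)
      hFD := Set.subset_union_left
      hzD := by
        intro γ hγ
        rw [Set.mem_union] at hγ
        push_neg at hγ
        rw [hz0]
        show (if γ = γ₀ then (1:ℝ) else 0) = 0
        exact if_neg (by simpa using hγ.2)
      hγ₀ := by
        rw [hz0]
        show (if γ₀ = γ₀ then (1:ℝ) else 0) = 1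
        exact if_pos rfl }
  refine ⟨⟨xc H s0, ⋃ n, Dc H s0 n,
    Set.countable_iUnion (fun n => (chainSeq H s0 n).hD), xc_pat H s0, ?_, ?_,
    xc_ne_zero H s0, fun w hw => xc_plateau H s0 hsm hw⟩⟩
  · intro γ hγ
    have hall : ∀ n, ev (Zc H s0 n) γ = 0 := fun n =>
      (chainSeq H s0 n).hzD γ (fun hin => hγ (Set.mem_iUnion.mpr ⟨n, hin⟩))
    exact limFun_zero H s0 hall
  · intro γ hγF
    have hγD0 : γ ∈ Dc H s0 0 := by
      show γ ∈ s0.D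
      exact Set.mem_union_left _ hγF
    have h00 : ev (Zc H s0 0) γ = 0 := by
      show ev z0 γ = 0
      rw [hz0]
      show (if γ = γ₀ then (1:ℝ) else 0) = 0
      refine if_neg ?_
      intro he
      rw [he] at hγF
      exact hγ₀ hγF
    exact limFun_zero H s0 (zero_forever H s0 hγD0 h00)

end AttSec

/-! ## The transfinite sequence of attainment points -/

section Trans
variable [Uncountable S] {N : linftyCF S → ℝ} {a b : ℝ}

/-- Elements of `S` with countable initial segment w.r.t. the well-ordering. -/
def Cnt (S : Type*) : Set S := {s : S | {t : S | WellOrderingRel t s}.Countable}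

/-- Index type: an uncountable well-order all of whose initial segments are countable. -/
def Idx (S : Type*) : Type _ := ↥(Cnt S)

/-- The order on the index type. -/
def rr : Idx S → Idx S → Prop := fun x y => WellOrderingRel x.1 y.1

lemma wfS : WellFounded (WellOrderingRel : S → S → Prop) :=
  (WellOrderingRel.isWellOrder).toIsWellFounded.wf

lemma wfr : WellFounded (rr : Idx S → Idx S → Prop) :=
  InvImage.wf Subtype.val wfS

lemma rr_trichotomous (x y : Idx S) : rr x y ∨ x = y ∨ rr y x := by
  rcases trichotomous_of (WellOrderingRel) x.1 y.1 with h | h | h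
  · exact Or.inl h
  · exact Or.inr (Or.inl (Subtype.ext h))
  · exact Or.inr (Or.inr h)

lemma seg_countable (x : Idx S) : {y : Idx S | rr y x}.Countable := by
  have h1 : {y : Idx S | rr y x} = Subtype.val ⁻¹' {t : S | WellOrderingRel t x.1} := rfl
  rw [h1]
  exact Set.Countable.preimage x.2 Subtype.val_injective

lemma idx_uncountable : ¬ Countable (Idx S) := by
  show ¬ Countable ↥(Cnt S)
  rw [Set.countable_coe_iff]
  by_cases hall : ∀ s : S, s ∈ Cnt S
  · intro hc
    exact Set.not_countable_univ (hc.mono (fun s _ => hall s))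
  · push_neg at hall
    obtain ⟨s₀, hs₀, hmin⟩ := wfS.has_min {s : S | s ∉ Cnt S} (by
      obtain ⟨s, hs⟩ := hall
      exact ⟨s, hs⟩)
    intro hc
    refine hs₀ ?_
    have hsub : {t : S | WellOrderingRel t s₀} ⊆ Cnt S := by
      intro t ht
      by_contra htc
      exact hmin t htc ht
    exact hc.mono hsub

variable (H : NormHyp N a b)
  (hsm : ∀ y : linftyCF S, y ≠ 0 → ∃ f, IsDeriv N y f)

/-- Transfinite recursion: each attainment construction avoids the footprints of all
previous ones. -/
noncomputable def cons : (x : Idx S) → (F : Set S) × Att N F :=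
  (wfr (S := S)).fix (fun x ih =>
    let F : Set S := ⋃ p : {y : Idx S // rr y x}, (ih p.1 p.2).2.D
    ⟨F, (att_exists H hsm F (by
      haveI : Countable {y : Idx S // rr y x} := (seg_countable x).to_subtype
      exact Set.countable_iUnion (fun p => (ih p.1 p.2).2.hD))).some⟩)

lemma cons_eq (x : Idx S) :
    cons H hsm x =
      ⟨⋃ p : {y : Idx S // rr y x}, (cons H hsm p.1).2.D,
        (att_exists H hsm _ (by
          haveI : Countable {y : Idx S // rr y x} := (seg_countable x).to_subtype
          exact Set.countable_iUnion (fun p => (cons H hsm p.1).2.hD))).some⟩ := by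
  exact (wfr (S := S)).fix_eq _ x

lemma cons_F_eq (x : Idx S) :
    (cons H hsm x).1 = ⋃ p : {y : Idx S // rr y x}, (cons H hsm p.1).2.D := by
  rw [cons_eq]

attribute [irreducible] cons

lemma fresh_of_earlier {y x : Idx S} (h : rr y x) :
    ∀ γ ∈ (cons H hsm y).2.D, ev (cons H hsm x).2.x γ = 0 := by
  intro γ hγ
  refine (cons H hsm x).2.hxF γ ?_
  rw [cons_F_eq]
  exact Set.mem_iUnion.mpr ⟨⟨y, h⟩, hγ⟩

/-- The norm value of each attainment point. -/
noncomputable def Rv (x : Idx S) : ℝ := N (cons H hsm x).2.x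

lemma N_neg (H : NormHyp N a b) (u : linftyCF S) : N (-u) = N u := by
  rw [show -u = (-1 : ℝ) • u by rw [neg_one_smul], H.hom]
  norm_num

lemma earlier_plateau {y x : Idx S} (h : rr y x) :
    N ((cons H hsm y).2.x + (cons H hsm x).2.x) = Rv H hsm y ∧
    N ((cons H hsm y).2.x - (cons H hsm x).2.x) = Rv H hsm y := by
  have hfresh : (cons H hsm x).2.x ∈ PatFresh (cons H hsm y).2.D :=
    ⟨(cons H hsm x).2.hpat, fresh_of_earlier H hsm h⟩
  constructor
  · exact (cons H hsm y).2.plateau _ hfresh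
  · rw [sub_eq_add_neg]
    exact (cons H hsm y).2.plateau _ (PatFresh.neg hfresh)

lemma Rv_antitone {y x : Idx S} (h : rr y x) : Rv H hsm x ≤ Rv H hsm y := by
  obtain ⟨h1, h2⟩ := earlier_plateau H hsm h
  obtain ⟨f, hf⟩ := hsm (cons H hsm x).2.x (cons H hsm x).2.hne
  have c1 : f (cons H hsm y).2.x ≤ Rv H hsm y - Rv H hsm x := by
    have := H.grad_le hf (cons H hsm y).2.x
    rw [add_comm] at this
    rw [← h1]
    exact this
  have c2 : f (-(cons H hsm y).2.x) ≤ Rv H hsm y - Rv H hsm x := by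
    have h3 := H.grad_le hf (-(cons H hsm y).2.x)
    have h4 : (cons H hsm x).2.x + -(cons H hsm y).2.x
        = -((cons H hsm y).2.x - (cons H hsm x).2.x) := by abel
    rw [h4, N_neg H, h2] at h3
    exact h3
  have c3 : f (-(cons H hsm y).2.x) = -(f (cons H hsm y).2.x) := map_neg f _
  linarith

lemma exists_equal_pair :
    ∃ y x : Idx S, rr y x ∧ Rv H hsm y = Rv H hsm x := by
  by_contra hc
  push_neg at hc
  have hstrict : ∀ y x : Idx S, rr y x → Rv H hsm x < Rv H hsm y := fun y x h =>
    lt_of_le_of_ne (Rv_antitone H hsm h) (fun he => hc y x h he.symm)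
  have hnomax : ∀ x : Idx S, {y : Idx S | rr x y}.Nonempty := by
    intro x
    rw [Set.nonempty_iff_ne_empty]
    intro hemp
    have huniv : (Set.univ : Set (Idx S)) ⊆ {y | rr y x} ∪ {x} := by
      intro y _
      rcases rr_trichotomous y x with h | h | h
      · exact Or.inl h
      · exact Or.inr (by simpa using h)
      · exact (Set.eq_empty_iff_forall_notMem.mp hemp y h).elim
    have hcnt : (Set.univ : Set (Idx S)).Countable :=
      ((seg_countable x).union (Set.countable_singleton x)).mono huniv
    exact idx_uncountable (Set.countable_univ_iff.mp hcnt)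
  let nxt : Idx S → Idx S := fun x => (wfr (S := S)).min {y | rr x y} (hnomax x)
  have hnxt1 : ∀ x, rr x (nxt x) := fun x => (wfr (S := S)).min_mem _ (hnomax x)
  have hnxt2 : ∀ x y, rr x y → ¬ rr y (nxt x) := fun x y hy =>
    (wfr (S := S)).not_lt_min {y | rr x y} hy
  have hq : ∀ x : Idx S, ∃ q : ℚ, Rv H hsm (nxt x) < q ∧ (q : ℝ) < Rv H hsm x :=
    fun x => exists_rat_btwn (hstrict x (nxt x) (hnxt1 x))
  choose q hq1 hq2 using hq
  have hmono : ∀ u v : Idx S, rr u v → q v < q u := by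
    intro u v huv
    have h1 : Rv H hsm v ≤ Rv H hsm (nxt u) := by
      rcases rr_trichotomous (nxt u) v with h | h | h
      · exact (hstrict _ _ h).le
      · rw [h]
      · exact absurd h (hnxt2 u v huv)
    have := hq1 u
    have := hq2 v
    have hcast : (q v : ℝ) < (q u : ℝ) := by linarith
    exact_mod_cast hcast
  have hinj : Function.Injective q := by
    intro u v huv
    by_contra hne
    rcases rr_trichotomous u v with h | h | h
    · exact absurd huv (ne_of_gt (hmono u v h))
    · exact hne h
    · exact absurd huv (ne_of_lt (hmono v u h))
  exact idx_uncountable (hinj.countable)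

end Trans

/-! ## The final contradiction -/

section Final
variable [Uncountable S] {N : linftyCF S → ℝ} {a b : ℝ}

set_option maxHeartbeats 1000000 in
lemma final_contradiction (H : NormHyp N a b)
    (hsm : ∀ y : linftyCF S, y ≠ 0 → ∃ f, IsDeriv N y f) : False := by
  obtain ⟨yι, xι, hyx, hReq⟩ := exists_equal_pair H hsm
  set A := (cons H hsm yι).2 with hA
  set B := (cons H hsm xι).2 with hB
  have hRvy : Rv H hsm yι = N A.x := rfl
  have hRvx : Rv H hsm xι = N B.x := rfl
  have hRB : N B.x = N A.x := by rw [← hRvx, ← hRvy, hReq]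
  have hRpos : 0 < N A.x := H.pos A.hne
  obtain ⟨hApB, hAmB⟩ := earlier_plateau H hsm hyx
  rw [hRvy] at hApB hAmB
  -- the derivative at B.x is blind to A.x
  obtain ⟨g, hg⟩ := hsm B.x B.hne
  have hgB : g B.x = N B.x := H.grad_self hg
  have hgA : g A.x = 0 := by
    have c1 : g A.x ≤ N (B.x + A.x) - N B.x := H.grad_le hg A.x
    rw [add_comm, hApB, hRB] at c1
    have c2 : g (-A.x) ≤ N (B.x + -A.x) - N B.x := H.grad_le hg (-A.x)
    have he : B.x + -A.x = -(A.x - B.x) := by abel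
    rw [he, N_neg H, hAmB, hRB] at c2
    have c3 : g (-A.x) = -(g A.x) := map_neg g _
    linarith
  -- the derivative at A.x is blind to B.x
  obtain ⟨fA, hfA⟩ := hsm A.x A.hne
  have hfAA : fA A.x = N A.x := H.grad_self hfA
  have hfAB : fA B.x = 0 := by
    have c1 : fA B.x ≤ N (A.x + B.x) - N A.x := H.grad_le hfA B.x
    rw [hApB] at c1
    have c2 : fA (-B.x) ≤ N (A.x + -B.x) - N A.x := H.grad_le hfA (-B.x)
    rw [show A.x + -B.x = A.x - B.x from by abel, hAmB] at c2
    have c3 : fA (-B.x) = -(fA B.x) := map_neg fA _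
    linarith
  -- plateau along the segment from A.x to A.x + B.x
  have hseg : ∀ σ : ℝ, σ ∈ Set.Icc (0:ℝ) 1 → N (A.x + σ • B.x) = N A.x := by
    intro σ hσ
    have hup : N (A.x + σ • B.x) ≤ N A.x := by
      have hid : A.x + σ • B.x = (1 - σ) • A.x + σ • (A.x + B.x) := smul_id _ _ _
      rw [hid]
      refine le_trans (H.sub _ _) ?_
      rw [H.hom, H.hom, abs_of_nonneg (by linarith [hσ.2] : (0:ℝ) ≤ 1 - σ),
        abs_of_nonneg hσ.1, hApB]
      have : (1 - σ) * N A.x + σ * N A.x = N A.x := by ring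
      linarith
    have hlo : N A.x ≤ N (A.x + σ • B.x) := by
      have h1 : fA (A.x + σ • B.x) ≤ N (A.x + σ • B.x) := H.grad_le_N hfA _
      rw [map_add, map_smul, hfAA, hfAB, smul_zero, add_zero] at h1
      exact h1
    linarith
  -- the midpoint
  set z : linftyCF S := (2⁻¹ : ℝ) • (A.x + B.x) with hzdef
  have hNz : N z = 2⁻¹ * N A.x := by
    rw [hzdef, H.hom, hApB]
    norm_num
  have hN0 : N (0 : linftyCF S) = 0 := by
    have h := H.hom 0 0
    simpa using h
  have hzne : z ≠ 0 := by
    intro h0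
    rw [h0, hN0] at hNz
    linarith
  obtain ⟨φ, hφ⟩ := hsm z hzne
  set hdir : linftyCF S := B.x - A.x with hhdir
  have hid' : ∀ τ : ℝ, z + τ • hdir = (2⁻¹ - τ) • A.x + (2⁻¹ + τ) • B.x := by
    intro τ
    rw [hzdef, hhdir, smul_add, smul_sub, sub_smul, add_smul]
    abel
  -- left side: exact linear values
  have hleft : ∀ τ : ℝ, τ ∈ Set.Ico (-(2⁻¹:ℝ)) 0 →
      N (z + τ • hdir) = (2⁻¹ - τ) * N A.x := by
    intro τ hτ
    have hτ1 : (0:ℝ) < 2⁻¹ - τ := by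
      have := hτ.2
      norm_num
      linarith
    set σ : ℝ := (2⁻¹ + τ) / (2⁻¹ - τ) with hσdef
    have hσ0 : 0 ≤ σ := div_nonneg (by linarith [hτ.1]) hτ1.le
    have hσ1 : σ ≤ 1 := by
      rw [hσdef, div_le_one hτ1]
      linarith [hτ.2]
    have hmul : (2⁻¹ - τ) * σ = 2⁻¹ + τ := by
      have hne : (2⁻¹ - τ) ≠ 0 := ne_of_gt hτ1
      rw [hσdef, mul_comm]
      exact div_mul_cancel₀ _ hne
    have hid : z + τ • hdir = (2⁻¹ - τ) • (A.x + σ • B.x) := by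
      rw [hid', smul_add, smul_smul, hmul]
    rw [hid, H.hom, abs_of_pos hτ1, hseg σ ⟨hσ0, hσ1⟩]
  -- right side: linear lower bound
  have hright : ∀ τ : ℝ, τ ∈ Set.Ioc (0:ℝ) (2⁻¹:ℝ) →
      (2⁻¹ + τ) * N A.x ≤ N (z + τ • hdir) := by
    intro τ hτ
    have h1 : g (z + τ • hdir) ≤ N (z + τ • hdir) := H.grad_le_N hg _
    rw [hid', map_add, map_smul, map_smul, hgA, hgB, hRB, smul_zero, zero_add,
      smul_eq_mul] at h1
    rw [← hid' τ] at h1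
    exact h1
  -- quotient limits
  have hq := hφ hdir
  have hqleft : φ hdir = -(N A.x) := by
    have hmono : Filter.Tendsto (fun τ : ℝ => (N (z + τ • hdir) - N z) / τ)
        (nhdsWithin 0 (Set.Iio 0)) (nhds (φ hdir)) :=
      hq.mono_left (nhdsWithin_mono 0 (fun t ht => ne_of_lt ht))
    refine tendsto_nhds_unique (hmono.congr' ?_) tendsto_const_nhds
    filter_upwards [Ico_mem_nhdsLT_of_mem
      (show (0:ℝ) ∈ Set.Ioc (-(2⁻¹:ℝ)) 0 by norm_num)] with τ hτ
    have hτ0 : τ ≠ 0 := ne_of_lt hτ.2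
    rw [hleft τ hτ, hNz]
    field_simp
    ring
  have hqright : N A.x ≤ φ hdir := by
    have hmono : Filter.Tendsto (fun τ : ℝ => (N (z + τ • hdir) - N z) / τ)
        (nhdsWithin 0 (Set.Ioi 0)) (nhds (φ hdir)) :=
      hq.mono_left (nhdsWithin_mono 0 (fun t ht => ne_of_gt ht))
    refine ge_of_tendsto hmono ?_
    filter_upwards [Ioc_mem_nhdsGT_of_mem
      (show (0:ℝ) ∈ Set.Ico (0:ℝ) (2⁻¹:ℝ) by norm_num)] with τ hτ
    rw [hNz, le_div_iff₀ hτ.1]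
    have := hright τ hτ
    linarith
  linarith [hqleft, hqright, hRpos]

end Final

end NoGateaux


/-- For an uncountable set `S`, the space `ℓ∞^{c,F}(S)` admits no
Gâteaux differentiable renorming: every equivalent norm fails to be Gâteaux differentiable
at some nonzero point. -/
theorem linftyCF_no_gateaux_renorming
    (S : Type*) [Uncountable S]
    (N : linftyCF S → ℝ) (hnorm : IsNorm N) (heq : IsEquivToAmbientNorm N) :
    ∃ x : linftyCF S, x ≠ 0 ∧ ¬ GateauxDifferentiableAt N x := by
  by_contra hc
  push_neg at hc
  obtain ⟨a, b, ha, hab, hbounds⟩ := heq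
  obtain ⟨hsub, hhom, -⟩ := hnorm
  have H : NoGateaux.NormHyp N a b :=
    ⟨ha, hab, hsub, hhom, fun x => (hbounds x).1, fun x => (hbounds x).2⟩
  have hsm : ∀ y : linftyCF S, y ≠ 0 → ∃ f, NoGateaux.IsDeriv N y f := by
    intro y hy
    exact hc y hy
  exact NoGateaux.final_contradiction H hsm
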